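/- Let π be a real random variable with a density f satisfying ‖f‖_∞ < ∞, let A ≠ 0, B ∈ ℝ, D ≠ 0, η ∈ ℝ and γ ∈ (0,1). Then E[ | |η(Aπ + B) + D|^{-γ} − |Aπ + B|^{-γ} | ] ≤ |A|^{-1} |D|^{1−γ} ‖f‖_∞ ∫_ℝ | |ηz + 1|^{-γ} − |z|^{-γ} | dz (the inequality being trivially true when the right-hand integral is infinite). -/

import Mathlib

open MeasureTheory Filter Set

noncomputable section

abbrev Sig := ℕ → Bool

def shift (t : Sig) : Sig := fun n => t (n + 1)

def birkhoff (φ : Sig → ℝ) (n : ℕ) (t : Sig) : ℝ :=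
  ∑ i ∈ Finset.range n, φ (shift^[i] t)

def cylN (t : Sig) (n : ℕ) : Set Sig := {s | ∀ i < n, s i = t i}

def cylF {n : ℕ} (w : Fin n → Bool) : Set Sig := {t | ∀ i : Fin n, t i = w i}

def takeF {m : ℕ} (w : Fin m → Bool) (k : ℕ) : Fin k → Bool :=
  fun i => if h : (i : ℕ) < m then w ⟨i, h⟩ else false

def takeInf (t : Sig) (k : ℕ) : Fin k → Bool := fun i => t i

noncomputable def lamF {n : ℕ} (w : Fin n → Bool) : ℝ :=
  ∑ i : Fin n, if w i then (2:ℝ) ^ (-((i:ℕ):ℤ) - 1) else 0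

noncomputable def lamInf (t : Sig) : ℝ :=
  ∑' i : ℕ, if t i then (2:ℝ) ^ (-(i:ℤ) - 1) else 0

noncomputable def rho (s t : Sig) : ℝ :=
  sInf {r : ℝ | ∃ n : ℕ, r = (2:ℝ) ^ (-(n:ℤ)) ∧ ∀ i < n, s i = t i}

noncomputable def distH (A B : Set Sig) : ℝ :=
  max (⨆ a ∈ A, ⨅ b ∈ B, rho a b) (⨆ b ∈ B, ⨅ a ∈ A, rho a b)

def HolderPotential (φ : Sig → ℝ) : Prop :=
  ∃ c > 0, ∃ a > 0, ∀ s t, |φ s - φ t| ≤ c * (rho s t) ^ a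

def GibbsOn (X : Set Sig) (φ : Sig → ℝ) (C P : ℝ) (μ : Measure Sig) : Prop :=
  ∀ t ∈ X, ∀ n : ℕ, ∀ t' ∈ cylN t n,
    C⁻¹ * Real.exp (birkhoff φ n t' - n * P) ≤ (μ (cylN t n)).toReal ∧
    (μ (cylN t n)).toReal ≤ C * Real.exp (birkhoff φ n t' - n * P)

def neigh {n : ℕ} (w : Fin n → Bool) : Set (Fin n → Bool) :=
  {u | |lamF u - lamF w| ≤ (2:ℝ) ^ (-(n:ℤ))}

def pairP (p : ℕ) : Set ((Fin (p+1) → Bool) × (Fin (p+1) → Bool)) :=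
  {uv | takeF uv.2 p ∈ neigh (takeF uv.1 p) ∧ uv.2 ∉ neigh uv.1}

noncomputable def oscil (f : ℝ → ℝ) (x r : ℝ) : ℝ :=
  sSup ((fun p : ℝ × ℝ => |f p.1 - f p.2|) ''
    ((Metric.ball x r ∩ Set.Icc 0 1) ×ˢ (Metric.ball x r ∩ Set.Icc 0 1)))

noncomputable def holderExp (f : ℝ → ℝ) (x : ℝ) : ℝ :=
  liminf (fun r => Real.log (oscil f x r) / Real.log r) (nhdsWithin 0 (Set.Ioi 0))

noncomputable def Ijk (j k : ℕ) : Set ℝ :=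
  Set.Ico ((k:ℝ) * (2:ℝ) ^ (-(j:ℤ))) (((k:ℝ) + 1) * (2:ℝ) ^ (-(j:ℤ)))

open scoped Classical in
noncomputable def tauSum (μ : Measure ℝ) (j : ℕ) (q : ℝ) : ℝ :=
  ∑ k ∈ Finset.range (2 ^ j), if μ (Ijk j k) ≠ 0 then (μ (Ijk j k)).toReal ^ q else 0

noncomputable def tauMeas (μ : Measure ℝ) (q : ℝ) : ℝ :=
  liminf (fun j : ℕ => -(1 / (j:ℝ)) * Real.logb 2 (tauSum μ j q)) atTop

noncomputable def xiF (μ : Measure ℝ) (s₀ p₀ : ℝ) (q : ℝ) : ℝ :=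
  q * (s₀ - 1/p₀) + tauMeas μ (q / p₀)

noncomputable def xiStar (μ : Measure ℝ) (s₀ p₀ : ℝ) (h : ℝ) : ℝ :=
  ⨅ q : ℝ, (q * h - xiF μ s₀ p₀ q)

noncomputable def FW {Ω : Type*} (μ : Measure ℝ) (s₀ p₀ : ℝ) (eps : ℕ → ℕ → ℝ)
    (ψ : ℝ → ℝ) (π : ℕ → ℕ → Ω → ℝ) (ω : Ω) (x : ℝ) : ℝ :=
  ∑' j : ℕ, ∑ k ∈ Finset.range (2 ^ j),
    π j k ω * eps j k * (2:ℝ) ^ (-(j:ℝ) * (s₀ - 1/p₀)) * (μ (Ijk j k)).toReal ^ (1/p₀) *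
      ψ ((2:ℝ) ^ (j:ℕ) * x - (k:ℝ))

open scoped Classical in
noncomputable def pressure (X : Set Sig) (φ : Sig → ℝ) : ℝ :=
  liminf (fun n : ℕ => (1 / (n:ℝ)) * Real.log
    (∑ w : Fin n → Bool,
      if (cylF w ∩ X).Nonempty then Real.exp (sSup (birkhoff φ n '' cylF w)) else 0)) atTop

noncomputable def tauPhi (φ : Sig → ℝ) (q : ℝ) : ℝ :=
  (q * pressure Set.univ φ - pressure Set.univ (fun t => q * φ t)) / Real.log 2

noncomputable def tauPhiStar (φ : Sig → ℝ) (α : ℝ) : ℝ := ⨅ q : ℝ, (q * α - tauPhi φ q)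

noncomputable def pGap (X : Set Sig) (φ : Sig → ℝ) (q : ℝ) : ℝ :=
  pressure Set.univ (fun t => q * φ t) - pressure X (fun t => q * φ t)

noncomputable def alphaQ (X : Set Sig) (φ : Sig → ℝ) (q : ℝ) : ℝ :=
  deriv (tauPhi φ) q + deriv (fun q' => pGap X φ q' / Real.log 2) q

noncomputable def hQ (X : Set Sig) (φ : Sig → ℝ) (s₀ p₀ q : ℝ) : ℝ :=
  s₀ - 1/p₀ + alphaQ X φ q / p₀

noncomputable def DQ (X : Set Sig) (φ : Sig → ℝ) (q : ℝ) : ℝ :=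
  tauPhiStar φ (deriv (tauPhi φ) q) -
    (-q * deriv (pGap X φ) q + pGap X φ q) / Real.log 2

lemma aux_max_sub (a b : ℝ) (ha : 0 ≤ a) (hb : 0 ≤ b) :
    max (ENNReal.ofReal a - ENNReal.ofReal b) (ENNReal.ofReal b - ENNReal.ofReal a)
      = ENNReal.ofReal |a - b| := by
  rcases le_total a b with h | h
  · rw [abs_sub_comm, abs_of_nonneg (sub_nonneg.2 h), ENNReal.ofReal_sub b ha,
      tsub_eq_zero_of_le (ENNReal.ofReal_le_ofReal h)]
    exact max_eq_right zero_le
  · rw [abs_of_nonneg (sub_nonneg.2 h), ENNReal.ofReal_sub a hb,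
      tsub_eq_zero_of_le (ENNReal.ofReal_le_ofReal h)]
    exact max_eq_left zero_le

theorem expectation_kernel_difference_bound
    {Ω : Type*} [MeasurableSpace Ω] (P : Measure Ω) [IsProbabilityMeasure P]
    (π : Ω → ℝ) (hπ : Measurable π)
    (f : ℝ → ℝ) (hf : Measurable f)
    (hdens : P.map π = volume.withDensity (fun x => ENNReal.ofReal (f x)))
    (hfb : eLpNorm f ⊤ volume < ⊤)
    (A B D η γ : ℝ) (hA : A ≠ 0) (hD : D ≠ 0) (hγ0 : 0 < γ) (hγ1 : γ < 1) :
    ∫⁻ ω, (max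
        ((ENNReal.ofReal |η * (A * π ω + B) + D| ^ (-γ)) -
          (ENNReal.ofReal |A * π ω + B| ^ (-γ)))
        ((ENNReal.ofReal |A * π ω + B| ^ (-γ)) -
          (ENNReal.ofReal |η * (A * π ω + B) + D| ^ (-γ)))) ∂P
      ≤ ENNReal.ofReal (|A|⁻¹ * |D| ^ (1 - γ) * (eLpNorm f ⊤ volume).toReal) *
          ∫⁻ z : ℝ, ENNReal.ofReal (abs (|η * z + 1| ^ (-γ) - |z| ^ (-γ))) := by

  set G : ℝ → ENNReal := fun x => max
      ((ENNReal.ofReal |η * (A * x + B) + D| ^ (-γ)) - (ENNReal.ofReal |A * x + B| ^ (-γ)))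
      ((ENNReal.ofReal |A * x + B| ^ (-γ)) - (ENNReal.ofReal |η * (A * x + B) + D| ^ (-γ)))
    with hGdef
  have habsD : (0:ℝ) < |D| := abs_pos.2 hD
  have hGmeas : Measurable G := by
    have h1 : Measurable fun x : ℝ => ENNReal.ofReal |η * (A * x + B) + D| ^ (-γ) :=
      (ENNReal.continuous_rpow_const.comp (ENNReal.continuous_ofReal.comp
        (continuous_abs.comp (by continuity)))).measurable
    have h2 : Measurable fun x : ℝ => ENNReal.ofReal |A * x + B| ^ (-γ) :=
      (ENNReal.continuous_rpow_const.comp (ENNReal.continuous_ofReal.comp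
        (continuous_abs.comp (by continuity)))).measurable
    exact (h1.sub h2).max (h2.sub h1)
  -- step 1
  have step1 : ∫⁻ ω, G (π ω) ∂P = ∫⁻ x, ENNReal.ofReal (f x) * G x := by
    rw [← lintegral_map hGmeas hπ, hdens,
      lintegral_withDensity_eq_lintegral_mul _ hf.ennreal_ofReal hGmeas]
    rfl
  -- step 2
  have step2 : ∫⁻ x, ENNReal.ofReal (f x) * G x ≤ eLpNorm f ⊤ volume * ∫⁻ x, G x := by
    rw [← lintegral_const_mul _ hGmeas]
    refine lintegral_mono_ae ?_
    filter_upwards [ae_le_eLpNormEssSup (f := f) (μ := volume)] with x hx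
    refine mul_le_mul_left (le_trans (Real.ofReal_le_enorm (f x)) ?_) _
    rw [eLpNorm_exponent_top]
    exact hx
  -- change of variables
  have hφmeas : Measurable fun z : ℝ => (D * z - B) / A := by fun_prop
  have hmap : Measure.map (fun z : ℝ => (D * z - B) / A) volume
      = ENNReal.ofReal |A / D| • volume := by
    have hφ : (fun z : ℝ => (D * z - B) / A)
        = (fun y : ℝ => A⁻¹ * y) ∘ ((fun y : ℝ => y + (-B)) ∘ (fun z : ℝ => D * z)) := by
      funext z; simp [Function.comp]; ring
    rw [hφ, ← Measure.map_map (by fun_prop) (by fun_prop),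
      ← Measure.map_map (by fun_prop) (by fun_prop),
      Real.map_volume_mul_left hD, Measure.map_smul, map_add_right_eq_self,
      Measure.map_smul, Real.map_volume_mul_left (inv_ne_zero hA), smul_smul,
      ← ENNReal.ofReal_mul (abs_nonneg _), inv_inv, ← abs_mul]
    congr 2
    field_simp
  have hchg : ∫⁻ x, G x = ENNReal.ofReal |D / A| * ∫⁻ z, G ((D * z - B) / A) := by
    have hm := lintegral_map hGmeas hφmeas (μ := volume)
    rw [hmap, lintegral_smul_measure, smul_eq_mul] at hm
    rw [← hm, ← mul_assoc, ← ENNReal.ofReal_mul (abs_nonneg _), ← abs_mul,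
      div_mul_div_comm, mul_comm D A, div_self (by positivity : A * D ≠ 0), abs_one,
      ENNReal.ofReal_one, one_mul]
  -- pointwise identification
  have key : ∀ z : ℝ, z ≠ 0 → η * z + 1 ≠ 0 →
      G ((D * z - B) / A)
        = ENNReal.ofReal (|D| ^ (-γ)) *
            ENNReal.ofReal (abs (|η * z + 1| ^ (-γ) - |z| ^ (-γ))) := by
    intro z hz hz2
    have h1 : A * ((D * z - B) / A) + B = D * z := by field_simp; ring
    have h2 : η * (D * z) + D = D * (η * z + 1) := by ring
    have ha : (0:ℝ) < |η * z + 1| := abs_pos.2 hz2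
    have hb : (0:ℝ) < |z| := abs_pos.2 hz
    have e1 : ENNReal.ofReal |η * (A * ((D * z - B) / A) + B) + D| ^ (-γ)
        = ENNReal.ofReal (|D| ^ (-γ)) * ENNReal.ofReal (|η * z + 1| ^ (-γ)) := by
      rw [h1, h2, abs_mul, ENNReal.ofReal_rpow_of_pos (by positivity),
        Real.mul_rpow (abs_nonneg _) (abs_nonneg _),
        ENNReal.ofReal_mul (by positivity)]
    have e2 : ENNReal.ofReal |A * ((D * z - B) / A) + B| ^ (-γ)
        = ENNReal.ofReal (|D| ^ (-γ)) * ENNReal.ofReal (|z| ^ (-γ)) := by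
      rw [h1, abs_mul, ENNReal.ofReal_rpow_of_pos (by positivity),
        Real.mul_rpow (abs_nonneg _) (abs_nonneg _),
        ENNReal.ofReal_mul (by positivity)]
    have hmono : Monotone fun x : ENNReal => ENNReal.ofReal (|D| ^ (-γ)) * x :=
      fun _ _ h => mul_le_mul_right h _
    rw [hGdef]
    simp only [e1, e2]
    rw [← ENNReal.mul_sub (fun _ _ => ENNReal.ofReal_ne_top),
      ← ENNReal.mul_sub (fun _ _ => ENNReal.ofReal_ne_top), ← hmono.map_max,
      aux_max_sub _ _ (by positivity) (by positivity)]
  have hae0 : ∀ᵐ z : ℝ, z ≠ 0 ∧ η * z + 1 ≠ 0 := by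
    rw [ae_iff]
    refine measure_mono_null (fun z hz => ?_) (((Set.finite_singleton (-η⁻¹)).insert 0).measure_zero volume)
    simp only [not_and_or, not_not, Set.mem_setOf_eq] at hz
    rcases hz with h | h
    · exact Set.mem_insert_iff.2 (Or.inl h)
    · have hη : η ≠ 0 := by rintro rfl; simp at h
      refine Set.mem_insert_iff.2 (Or.inr ?_)
      simp only [Set.mem_singleton_iff]
      field_simp
      linarith
  have hzint : ∫⁻ z, G ((D * z - B) / A)
      = ENNReal.ofReal (|D| ^ (-γ)) *
          ∫⁻ z : ℝ, ENNReal.ofReal (abs (|η * z + 1| ^ (-γ) - |z| ^ (-γ))) := by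
    rw [← lintegral_const_mul' _ _ ENNReal.ofReal_ne_top]
    refine lintegral_congr_ae ?_
    filter_upwards [hae0] with z hz
    exact key z hz.1 hz.2
  -- assemble
  calc ∫⁻ ω, G (π ω) ∂P
      = ∫⁻ x, ENNReal.ofReal (f x) * G x := step1
    _ ≤ eLpNorm f ⊤ volume * ∫⁻ x, G x := step2
    _ = ENNReal.ofReal (|A|⁻¹ * |D| ^ (1 - γ) * (eLpNorm f ⊤ volume).toReal) *
          ∫⁻ z : ℝ, ENNReal.ofReal (abs (|η * z + 1| ^ (-γ) - |z| ^ (-γ))) := by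
        rw [hchg, hzint, ← ENNReal.ofReal_toReal hfb.ne, ← mul_assoc, ← mul_assoc,
          ← ENNReal.ofReal_mul ENNReal.toReal_nonneg,
          ← ENNReal.ofReal_mul (by positivity)]
        congr 2
        rw [abs_div, show (1:ℝ) - γ = 1 + (-γ) by ring, Real.rpow_add habsD, Real.rpow_one,
          ENNReal.toReal_ofReal ENNReal.toReal_nonneg]
        ring
end
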